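/- Let q ∈ (0,1), β < 1, and |t| < |z| < 1 with q(τ+τ⁻¹) = β(z+z⁻¹). Then the generating function identity holds: ∑_{n=0}^∞ ((β;q)_n/(q;q)_n) p_n^{(q,β)}(z+z⁻¹) t^n = (qτt;q)_∞ (qτ⁻¹t;q)_∞ / ((zt;q)_∞ (z⁻¹t;q)_∞). -/

import Mathlib

/-- The finite q-Pochhammer symbol `(a;Q)_n = ∏_{j=0}^{n-1} (1 - a Q^j)`. -/
def qPoch (a Q : ℂ) (n : ℕ) : ℂ := ∏ j ∈ Finset.range n, (1 - a * Q ^ j)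

/-- The infinite q-Pochhammer symbol `(a;Q)_∞ = ∏_{j=0}^{∞} (1 - a Q^j)`. -/
noncomputable def qPochInf (a Q : ℂ) : ℂ := ∏' j : ℕ, (1 - a * Q ^ j)




section Infra

variable {q : ℝ} (hq0 : 0 < q) (hq1 : q < 1)

include hq0 in
lemma norm_cq_pow (n : ℕ) : ‖((q:ℂ))^n‖ = q^n := by
  rw [norm_pow, Complex.norm_real, Real.norm_of_nonneg hq0.le]

include hq0 hq1 in
lemma norm_log_factor_le (a : ℂ) (ha : ‖a‖ ≤ 1/2) (n : ℕ) :
    ‖Complex.log (1 - a * (q:ℂ)^n)‖ ≤ 3/2 * ‖a‖ * q^n := by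
  have hqn : q^n ≤ 1 := pow_le_one₀ hq0.le hq1.le
  have hno : ‖-(a * (q:ℂ)^n)‖ ≤ 1/2 := by
    rw [norm_neg, norm_mul, norm_cq_pow hq0]
    calc ‖a‖ * q^n ≤ ‖a‖ * 1 := mul_le_mul_of_nonneg_left hqn (norm_nonneg a)
      _ ≤ 1/2 := by simpa using ha
  have := Complex.norm_log_one_add_half_le_self hno
  rw [show (1 : ℂ) + -(a * (q:ℂ)^n) = 1 - a * (q:ℂ)^n by ring] at this
  rw [norm_neg, norm_mul, norm_cq_pow hq0] at this
  calc ‖Complex.log (1 - a * (q:ℂ)^n)‖ ≤ 3/2 * (‖a‖ * q^n) := this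
    _ = 3/2 * ‖a‖ * q^n := by ring

include hq0 hq1 in
lemma summable_log_small (a : ℂ) (ha : ‖a‖ ≤ 1/2) :
    Summable (fun n : ℕ => Complex.log (1 - a * (q:ℂ)^n)) := by
  have hg : Summable (fun n : ℕ => (3/2) * ‖a‖ * q^n) :=
    (summable_geometric_of_lt_one hq0.le hq1).mul_left _
  exact Summable.of_norm_bounded hg (norm_log_factor_le hq0 hq1 a ha)

include hq0 hq1 in
lemma factor_ne_zero (a : ℂ) (ha : ‖a‖ < 1) (n : ℕ) : (1 : ℂ) - a * (q:ℂ)^n ≠ 0 := by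
  intro h
  have h1 : a * (q:ℂ)^n = 1 := by linear_combination -h
  have : ‖a * (q:ℂ)^n‖ < 1 := by
    rw [norm_mul, norm_cq_pow hq0]
    calc ‖a‖ * q^n ≤ ‖a‖ * 1 := mul_le_mul_of_nonneg_left (pow_le_one₀ hq0.le hq1.le) (norm_nonneg a)
      _ < 1 := by simpa using ha
  rw [h1] at this; simp at this

include hq0 hq1 in
lemma multipliable_small (a : ℂ) (ha : ‖a‖ ≤ 1/2) :
    Multipliable (fun n : ℕ => 1 - a * (q:ℂ)^n) := by
  have := Complex.multipliable_of_summable_log (summable_log_small hq0 hq1 a ha)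
  exact this

include hq0 hq1 in
lemma exists_small (a : ℂ) (ε : ℝ) (hε : 0 < ε) : ∃ k : ℕ, ‖a‖ * q^k ≤ ε := by
  have h : Filter.Tendsto (fun k : ℕ => ‖a‖ * q^k) Filter.atTop (nhds 0) := by
    simpa using (tendsto_pow_atTop_nhds_zero_of_lt_one hq0.le hq1).const_mul ‖a‖
  exact (h.eventually_le_const hε).exists

include hq0 hq1 in
lemma multipliable_gen (a : ℂ) : Multipliable (fun n : ℕ => 1 - a * (q:ℂ)^n) := by
  obtain ⟨k, hk⟩ := exists_small hq0 hq1 a (1/2) (by norm_num)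
  apply Multipliable.comp_nat_add (k := k)
  have hfun : (fun n : ℕ => (1 : ℂ) - a * (q:ℂ)^(n+k)) =
      (fun n : ℕ => 1 - (a * (q:ℂ)^k) * (q:ℂ)^n) := by
    funext n; rw [pow_add]; ring
  rw [hfun]
  exact multipliable_small hq0 hq1 _ (by rw [norm_mul, norm_cq_pow hq0]; exact hk)

include hq0 hq1 in
lemma qPochInf_shift (a : ℂ) (k : ℕ) :
    qPochInf a q = (∏ j ∈ Finset.range k, (1 - a * (q:ℂ)^j)) * qPochInf (a * (q:ℂ)^k) q := by
  have hm := multipliable_gen hq0 hq1 (a * (q:ℂ)^k)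
  have hfun : (fun n : ℕ => (1 : ℂ) - (a * (q:ℂ)^k) * (q:ℂ)^n) =
      (fun n : ℕ => 1 - a * (q:ℂ)^(n+k)) := by
    funext n; rw [pow_add]; ring
  have h2 : HasProd (fun n : ℕ => (1 : ℂ) - a * (q:ℂ)^(n+k)) (qPochInf (a * (q:ℂ)^k) q) := by
    rw [← hfun]; exact hm.hasProd
  have h3 : HasProd (fun j : ℕ => (1 : ℂ) - a * (q:ℂ)^j)
      ((∏ j ∈ Finset.range k, (1 - a * (q:ℂ)^j)) * qPochInf (a * (q:ℂ)^k) q) :=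
    HasProd.prod_range_mul h2
  exact h3.tprod_eq

include hq0 hq1 in
lemma qPochInf_est (a : ℂ) (ha : ‖a‖ ≤ (1-q)/2) :
    ‖qPochInf a q - 1‖ ≤ 3 * ‖a‖ / (1-q) := by
  have hq' : (0:ℝ) < 1 - q := by linarith
  have ha2 : ‖a‖ ≤ 1/2 := by nlinarith [norm_nonneg a]
  have hne := fun n => factor_ne_zero hq0 hq1 a (lt_of_le_of_lt ha2 (by norm_num)) n
  have hlog := summable_log_small hq0 hq1 a ha2
  have hexp : Complex.exp (∑' n : ℕ, Complex.log (1 - a * (q:ℂ)^n)) = qPochInf a q := by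
    have := Complex.cexp_tsum_eq_tprod (f := fun n => 1 - a * (q:ℂ)^n) hne hlog
    exact this
  have hnorms : Summable (fun n : ℕ => ‖Complex.log (1 - a * (q:ℂ)^n)‖) :=
    Summable.of_nonneg_of_le (fun n => norm_nonneg _) (norm_log_factor_le hq0 hq1 a ha2)
      ((summable_geometric_of_lt_one hq0.le hq1).mul_left (3/2 * ‖a‖))
  have hS : ‖∑' n : ℕ, Complex.log (1 - a * (q:ℂ)^n)‖ ≤ 3/2 * ‖a‖ / (1-q) := by
    refine (norm_tsum_le_tsum_norm hnorms).trans ?_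
    have h1 : ∑' n : ℕ, ‖Complex.log (1 - a * (q:ℂ)^n)‖ ≤ ∑' n : ℕ, 3/2 * ‖a‖ * q^n :=
      Summable.tsum_le_tsum (norm_log_factor_le hq0 hq1 a ha2) hnorms
        ((summable_geometric_of_lt_one hq0.le hq1).mul_left _)
    rw [tsum_mul_left, tsum_geometric_of_lt_one hq0.le hq1] at h1
    calc (∑' n : ℕ, ‖Complex.log (1 - a * (q:ℂ)^n)‖) ≤ 3/2 * ‖a‖ * (1-q)⁻¹ := h1
      _ = 3/2 * ‖a‖ / (1-q) := by ring
  have hS1 : ‖∑' n : ℕ, Complex.log (1 - a * (q:ℂ)^n)‖ ≤ 1 := by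
    refine hS.trans ?_
    rw [div_le_one hq']
    nlinarith [norm_nonneg a]
  have h2 := Complex.norm_exp_sub_one_le hS1
  rw [hexp] at h2
  calc ‖qPochInf a q - 1‖ ≤ 2 * ‖∑' n : ℕ, Complex.log (1 - a * (q:ℂ)^n)‖ := h2
    _ ≤ 2 * (3/2 * ‖a‖ / (1-q)) := by linarith
    _ = 3 * ‖a‖ / (1-q) := by ring

include hq0 hq1 in
lemma qPochInf_ne_zero (a : ℂ) (ha : ‖a‖ < 1) : qPochInf a q ≠ 0 := by
  have hq' : (0:ℝ) < 1 - q := by linarith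
  obtain ⟨k, hk⟩ := exists_small hq0 hq1 a ((1-q)/4) (by linarith)
  rw [qPochInf_shift hq0 hq1 a k]
  apply mul_ne_zero
  · exact Finset.prod_ne_zero_iff.2 (fun j _ => factor_ne_zero hq0 hq1 a ha j)
  · intro h0
    have hval : ‖a * (q:ℂ)^k‖ ≤ (1-q)/2 := by
      rw [norm_mul, norm_cq_pow hq0]; linarith
    have := qPochInf_est hq0 hq1 (a * (q:ℂ)^k) hval
    rw [h0] at this
    rw [norm_mul, norm_cq_pow hq0] at this
    simp only [zero_sub, norm_neg, norm_one] at this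
    have h34 : 3 * (‖a‖ * q^k) / (1-q) ≤ 3/4 := by
      rw [div_le_iff₀ hq']; nlinarith
    linarith

end Infra




noncomputable def Aseq (q β : ℝ) (p : ℕ → ℂ → ℂ) (x : ℂ) (n : ℕ) : ℂ :=
  qPoch (β:ℝ) (q:ℝ) n / qPoch (q:ℝ) (q:ℝ) n * p n x

section Rec

variable {q β : ℝ} (hq0 : 0 < q) (hq1 : q < 1) (hβ : β < 1)

include hq0 hq1 hβ in
lemma one_sub_beta_pow_ne (j : ℕ) : (1:ℂ) - (β:ℂ) * (q:ℂ)^j ≠ 0 := by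
  have hr : (0:ℝ) < 1 - β * q^j := by
    have h1 : q^j ≤ 1 := pow_le_one₀ hq0.le hq1.le
    have h2 : 0 < q^j := pow_pos hq0 j
    nlinarith
  have : ((1 - β * q^j : ℝ) : ℂ) ≠ 0 := by
    exact_mod_cast Complex.ofReal_ne_zero.2 (ne_of_gt hr)
  convert this using 1
  push_cast; ring

include hq0 hq1 in
lemma one_sub_q_pow_ne (j : ℕ) (hj : 1 ≤ j) : (1:ℂ) - (q:ℂ)^j ≠ 0 := by
  have hr : (0:ℝ) < 1 - q^j := by
    have : q^j < 1 := pow_lt_one₀ hq0.le hq1 (by omega)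
    linarith
  have : ((1 - q^j : ℝ) : ℂ) ≠ 0 := Complex.ofReal_ne_zero.2 (ne_of_gt hr)
  convert this using 1
  push_cast; ring

include hq0 hq1 in
lemma qPoch_q_ne (n : ℕ) : qPoch (q:ℝ) (q:ℝ) n ≠ 0 := by
  unfold qPoch
  refine Finset.prod_ne_zero_iff.2 (fun j _ => ?_)
  have := one_sub_q_pow_ne hq0 hq1 (j+1) (by omega)
  rw [pow_succ'] at this
  exact this

variable (p : ℕ → ℂ → ℂ) (x : ℂ)
  (hp0 : p 0 x = 1) (hp1 : p 1 x = x)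
  (hprec : ∀ n : ℕ, 1 ≤ n →
      p (n + 1) x = x * p n x -
        ((1 - (q : ℂ) ^ n) / (1 - (β : ℂ) * (q : ℂ) ^ (n - 1))) *
        ((1 - (q : ℂ) ^ (n + 1)) / (1 - (β : ℂ) * (q : ℂ) ^ n)) * p (n - 1) x)

include hp0 in
lemma Aseq_zero : Aseq q β p x 0 = 1 := by
  unfold Aseq qPoch; simp [hp0]

include hq0 hq1 hβ hp0 hp1 in
lemma Aseq_one : (1 - (q:ℂ)) * Aseq q β p x 1 = x * (1 - (β:ℂ)) * Aseq q β p x 0 := by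
  unfold Aseq qPoch
  simp only [Finset.prod_range_one, Finset.prod_range_zero, pow_zero, mul_one, hp0, hp1]
  have hq : (1:ℂ) - (q:ℂ) ≠ 0 := by
    have := one_sub_q_pow_ne hq0 hq1 1 le_rfl; simpa using this
  field_simp

include hq0 hq1 hβ hprec in
lemma Aseq_rec (n : ℕ) :
    (1 - (q:ℂ)^(n+2)) * Aseq q β p x (n+2)
      = x * (1 - (β:ℂ)*(q:ℂ)^(n+1)) * Aseq q β p x (n+1)
        - (1 - (q:ℂ)^(n+2)) * Aseq q β p x n := by
  have hp2 : p (n+2) x = x * p (n+1) x -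
      ((1 - (q:ℂ)^(n+1)) / (1 - (β:ℂ)*(q:ℂ)^n)) *
      ((1 - (q:ℂ)^(n+2)) / (1 - (β:ℂ)*(q:ℂ)^(n+1))) * p n x := by
    have := hprec (n+1) (by omega)
    simpa using this
  unfold Aseq
  have e1 : qPoch (β:ℝ) (q:ℝ) (n+1) = qPoch (β:ℝ) (q:ℝ) n * (1 - (β:ℂ)*(q:ℂ)^n) :=
    Finset.prod_range_succ _ n
  have e2 : qPoch (β:ℝ) (q:ℝ) (n+2) = qPoch (β:ℝ) (q:ℝ) n * (1 - (β:ℂ)*(q:ℂ)^n) * (1 - (β:ℂ)*(q:ℂ)^(n+1)) := by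
    rw [← e1]; exact Finset.prod_range_succ _ (n+1)
  have f1 : qPoch (q:ℝ) (q:ℝ) (n+1) = qPoch (q:ℝ) (q:ℝ) n * (1 - (q:ℂ)^(n+1)) := by
    have := Finset.prod_range_succ (fun j => (1 : ℂ) - (q:ℂ) * (q:ℂ)^j) n
    rw [← pow_succ'] at this
    exact this
  have f2 : qPoch (q:ℝ) (q:ℝ) (n+2) = qPoch (q:ℝ) (q:ℝ) n * (1 - (q:ℂ)^(n+1)) * (1 - (q:ℂ)^(n+2)) := by
    rw [← f1]
    have := Finset.prod_range_succ (fun j => (1 : ℂ) - (q:ℂ) * (q:ℂ)^j) (n+1)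
    rw [← pow_succ'] at this
    exact this
  rw [hp2, e1, e2, f1, f2]
  have hb0 := one_sub_beta_pow_ne hq0 hq1 hβ n
  have hb1 := one_sub_beta_pow_ne hq0 hq1 hβ (n+1)
  have hq1' := one_sub_q_pow_ne hq0 hq1 (n+1) (by omega)
  have hq2' := one_sub_q_pow_ne hq0 hq1 (n+2) (by omega)
  have hpq := qPoch_q_ne hq0 hq1 n
  field_simp

end Rec


section Growth

variable {q β : ℝ} (hq0 : 0 < q) (hq1 : q < 1)

include hq0 hq1 in
lemma one_sub_q_pow_ne' (j : ℕ) (hj : 1 ≤ j) : (1:ℂ) - (q:ℂ)^j ≠ 0 := by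
  have hr : (0:ℝ) < 1 - q^j := by
    have : q^j < 1 := pow_lt_one₀ hq0.le hq1 (by omega)
    linarith
  have : ((1 - q^j : ℝ) : ℂ) ≠ 0 := Complex.ofReal_ne_zero.2 (ne_of_gt hr)
  convert this using 1
  push_cast; ring

include hq0 hq1 in
lemma seq_bound (ρ C : ℝ) (hρ0 : 0 < ρ) (hρ1 : ρ < 1) (hC0 : 0 ≤ C)
    (b w : ℕ → ℝ) (hbnn : ∀ n, 0 ≤ b n) (hwnn : ∀ n, 0 ≤ w n)
    (hb1 : ∀ n, b (n+1) ≤ ρ^2 * b n + w n)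
    (hw1 : ∀ n, w (n+1) ≤ w n + C * q^n * b (n+1)) :
    ∃ M : ℝ, 0 < M ∧ ∀ n, b n ≤ M := by
  have hρ2 : (0:ℝ) < 1 - ρ^2 := by nlinarith
  have h1q : (0:ℝ) < 1 - q := by linarith
  have htend : Filter.Tendsto (fun n : ℕ => C * q^n / (1-q)) Filter.atTop (nhds 0) := by
    have := (tendsto_pow_atTop_nhds_zero_of_lt_one hq0.le hq1).const_mul C
    simpa using this.div_const (1-q)
  obtain ⟨n₀, hn₀⟩ := (htend.eventually_le_const (show (0:ℝ) < (1-ρ^2)/4 by linarith)).exists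
  obtain ⟨M, hMdef⟩ : ∃ M : ℝ, M = 1 + (∑ k ∈ Finset.range (n₀+1), b k) + 4 * w n₀ / (1-ρ^2) :=
    ⟨_, rfl⟩
  obtain ⟨K, hKdef⟩ : ∃ K : ℝ, K = C * M / (1-q) := ⟨_, rfl⟩
  have hsum_nn : 0 ≤ ∑ k ∈ Finset.range (n₀+1), b k := Finset.sum_nonneg (fun k _ => hbnn k)
  have hM0 : 0 < M := by
    have h2 : 0 ≤ 4 * w n₀ / (1-ρ^2) := by have := hwnn n₀; positivity
    rw [hMdef]; linarith
  have hMb : ∀ k, k ≤ n₀ → b k ≤ M := by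
    intro k hk
    have h1 : b k ≤ ∑ j ∈ Finset.range (n₀+1), b j :=
      Finset.single_le_sum (fun j _ => hbnn j) (Finset.mem_range.2 (by omega))
    have h2 : 0 ≤ 4 * w n₀ / (1-ρ^2) := by have := hwnn n₀; positivity
    rw [hMdef]; linarith
  have hMw : w n₀ ≤ (1-ρ^2) * M / 4 := by
    have h1 : 4 * w n₀ / (1-ρ^2) ≤ M := by rw [hMdef]; linarith
    have h2 := (div_le_iff₀ hρ2).mp h1
    nlinarith
  have hKq : K * q^n₀ ≤ (1-ρ^2)/4 * M := by
    have := mul_le_mul_of_nonneg_right hn₀ hM0.le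
    calc K * q^n₀ = (C * q^n₀ / (1-q)) * M := by rw [hKdef]; ring
      _ ≤ (1-ρ^2)/4 * M := this
  have hK0 : 0 ≤ K := by rw [hKdef]; positivity
  have hinv : ∀ n, n₀ ≤ n → b n ≤ M ∧ w n ≤ (1-ρ^2)*M/2 - K*q^n := by
    intro n hn
    induction n, hn using Nat.le_induction with
    | base =>
      refine ⟨hMb n₀ le_rfl, ?_⟩
      nlinarith
    | succ n hn ih =>
      obtain ⟨hbn, hwn⟩ := ih
      have hpos : 0 ≤ K*q^n := by positivity
      have hwn' : w n ≤ (1-ρ^2)*M/2 := by linarith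
      have hb' : b (n+1) ≤ M := by
        have h := hb1 n
        have e1 : ρ^2 * b n ≤ ρ^2 * M := mul_le_mul_of_nonneg_left hbn (by positivity)
        nlinarith [mul_nonneg hρ2.le hM0.le]
      refine ⟨hb', ?_⟩
      have h := hw1 n
      have hqq : C*q^n*b (n+1) ≤ C*q^n*M := by
        have : 0 ≤ C*q^n := by positivity
        exact mul_le_mul_of_nonneg_left hb' this
      have hident : K*q^n - K*q^(n+1) = C*q^n*M := by
        rw [hKdef]; field_simp; ring
      linarith
  refine ⟨M, hM0, fun n => ?_⟩
  rcases le_or_gt n n₀ with h | h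
  · exact hMb n h
  · exact (hinv n h.le).1

include hq0 hq1 in
lemma growth_bound (A : ℕ → ℂ) (z : ℂ) (hz0 : z ≠ 0) (hz1 : ‖z‖ < 1)
    (hrec : ∀ n : ℕ, (1 - (q:ℂ)^(n+2)) * A (n+2)
      = (z + z⁻¹) * (1 - (β:ℂ)*(q:ℂ)^(n+1)) * A (n+1) - (1 - (q:ℂ)^(n+2)) * A n) :
    ∃ M : ℝ, 0 < M ∧ ∀ n : ℕ, ‖A n‖ * ‖z‖^n ≤ M := by
  have hρ0 : 0 < ‖z‖ := norm_pos_iff.2 hz0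
  have h1q : (0:ℝ) < 1 - q := by linarith
  have hzz : z * z⁻¹ = 1 := mul_inv_cancel₀ hz0
  have Aexp : ∀ n : ℕ, A (n+2) = (z + z⁻¹) * A (n+1) - A n
      + (z + z⁻¹) * ((q:ℂ)^(n+1)*((q:ℂ)-(β:ℂ))/(1 - (q:ℂ)^(n+2))) * A (n+1) := by
    intro n
    have hne := one_sub_q_pow_ne' hq0 hq1 (n+2) (by omega)
    refine mul_left_cancel₀ hne ?_
    rw [hrec n]
    field_simp
    ring
  have hb1 : ∀ n : ℕ, ‖A (n+1)‖ * ‖z‖^(n+1)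
      ≤ ‖z‖^2 * (‖A n‖ * ‖z‖^n) + ‖(A (n+1) - z * A n) * z^(n+1)‖ := by
    intro n
    have hid : A (n+1) * z^(n+1) = z^(n+2) * A n + (A (n+1) - z * A n) * z^(n+1) := by ring
    calc ‖A (n+1)‖ * ‖z‖^(n+1) = ‖A (n+1) * z^(n+1)‖ := by rw [norm_mul, norm_pow]
      _ = ‖z^(n+2) * A n + (A (n+1) - z * A n) * z^(n+1)‖ := by rw [hid]
      _ ≤ ‖z^(n+2) * A n‖ + ‖(A (n+1) - z * A n) * z^(n+1)‖ := norm_add_le _ _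
      _ = ‖z‖^2 * (‖A n‖ * ‖z‖^n) + ‖(A (n+1) - z * A n) * z^(n+1)‖ := by
          rw [norm_mul, norm_pow]; ring
  have hw1 : ∀ n : ℕ, ‖(A (n+2) - z * A (n+1)) * z^(n+2)‖
      ≤ ‖(A (n+1) - z * A n) * z^(n+1)‖
        + (‖z + z⁻¹‖ * |q - β| * q * ‖z‖ / (1-q)) * q^n * (‖A (n+1)‖ * ‖z‖^(n+1)) := by
    intro n
    have hne := one_sub_q_pow_ne' hq0 hq1 (n+2) (by omega)
    have hid : (A (n+2) - z * A (n+1)) * z^(n+2)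
        = (A (n+1) - z * A n) * z^(n+1)
          + (z + z⁻¹) * ((q:ℂ)^(n+1)*((q:ℂ)-(β:ℂ))/(1 - (q:ℂ)^(n+2))) * A (n+1) * z^(n+2) := by
      rw [Aexp n]
      linear_combination (A (n+1) * z^(n+1)) * hzz
    have hE : ‖(q:ℂ)^(n+1)*((q:ℂ)-(β:ℂ))/(1 - (q:ℂ)^(n+2))‖ ≤ q^(n+1) * |q - β| / (1-q) := by
      rw [norm_div, norm_mul]
      have e1 : ‖((q:ℂ))^(n+1)‖ = q^(n+1) := by
        rw [norm_pow, Complex.norm_real, Real.norm_of_nonneg hq0.le]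
      have e2 : ‖(q:ℂ)-(β:ℂ)‖ = |q - β| := by
        rw [show (q:ℂ)-(β:ℂ) = ((q - β : ℝ) : ℂ) by push_cast; ring, Complex.norm_real,
          Real.norm_eq_abs]
      have e3 : ‖(1:ℂ) - (q:ℂ)^(n+2)‖ = 1 - q^(n+2) := by
        rw [show (1:ℂ) - (q:ℂ)^(n+2) = ((1 - q^(n+2) : ℝ) : ℂ) by push_cast; ring,
          Complex.norm_real, Real.norm_of_nonneg]
        have : q^(n+2) < 1 := pow_lt_one₀ hq0.le hq1 (by omega)
        linarith
      rw [e1, e2, e3]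
      have h4 : q^(n+2) ≤ q := by
        calc q^(n+2) ≤ q^1 := pow_le_pow_of_le_one hq0.le hq1.le (by omega)
          _ = q := pow_one q
      gcongr
    calc ‖(A (n+2) - z * A (n+1)) * z^(n+2)‖
        ≤ ‖(A (n+1) - z * A n) * z^(n+1)‖
          + ‖(z + z⁻¹) * ((q:ℂ)^(n+1)*((q:ℂ)-(β:ℂ))/(1 - (q:ℂ)^(n+2))) * A (n+1) * z^(n+2)‖ := by
          rw [hid]; exact norm_add_le _ _
      _ ≤ ‖(A (n+1) - z * A n) * z^(n+1)‖
          + (‖z + z⁻¹‖ * |q - β| * q * ‖z‖ / (1-q)) * q^n * (‖A (n+1)‖ * ‖z‖^(n+1)) := by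
          have hnorm : ‖(z + z⁻¹) * ((q:ℂ)^(n+1)*((q:ℂ)-(β:ℂ))/(1 - (q:ℂ)^(n+2))) * A (n+1) * z^(n+2)‖
              ≤ (‖z + z⁻¹‖ * |q - β| * q * ‖z‖ / (1-q)) * q^n * (‖A (n+1)‖ * ‖z‖^(n+1)) := by
            rw [norm_mul, norm_mul, norm_mul, norm_pow]
            calc ‖z + z⁻¹‖ * ‖(q:ℂ)^(n+1)*((q:ℂ)-(β:ℂ))/(1 - (q:ℂ)^(n+2))‖ * ‖A (n+1)‖ * ‖z‖^(n+2)
                ≤ ‖z + z⁻¹‖ * (q^(n+1) * |q - β| / (1-q)) * ‖A (n+1)‖ * ‖z‖^(n+2) := by gcongr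
              _ = (‖z + z⁻¹‖ * |q - β| * q * ‖z‖ / (1-q)) * q^n * (‖A (n+1)‖ * ‖z‖^(n+1)) := by
                  field_simp
                  ring
          linarith
  have hC0 : 0 ≤ ‖z + z⁻¹‖ * |q - β| * q * ‖z‖ / (1-q) := by positivity
  obtain ⟨M, hM0, hM⟩ := seq_bound hq0 hq1 ‖z‖ (‖z + z⁻¹‖ * |q - β| * q * ‖z‖ / (1-q)) hρ0 hz1 hC0
    (fun n => ‖A n‖ * ‖z‖^n) (fun n => ‖(A (n+1) - z * A n) * z^(n+1)‖)
    (fun n => by positivity) (fun n => norm_nonneg _) hb1 hw1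
  exact ⟨M, hM0, hM⟩

end Growth


section FE

variable {q β : ℝ} (hq0 : 0 < q) (hq1 : q < 1)
variable {A : ℕ → ℂ} {ρ M : ℝ} {t : ℂ}

lemma summable_master (hρ0 : 0 < ρ) (htρ : ‖t‖ < ρ) (hM : ∀ n, ‖A n‖ * ρ^n ≤ M)
    (c : ℕ → ℂ) (K : ℝ) (hK0 : 0 ≤ K) (hc : ∀ n, ‖c n‖ ≤ K) (k j : ℕ)
    (s : ℂ) (hs : ‖s‖ ≤ ‖t‖) :
    Summable (fun n : ℕ => c n * A (n+k) * s^(n+j)) := by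
  have hr0 : 0 ≤ ‖t‖/ρ := div_nonneg (norm_nonneg t) hρ0.le
  have hr1 : ‖t‖/ρ < 1 := (div_lt_one hρ0).2 htρ
  refine Summable.of_norm_bounded (g := fun n => (K*M*‖t‖^j/ρ^k) * (‖t‖/ρ)^n)
    ((summable_geometric_of_lt_one hr0 hr1).mul_left _) (fun n => ?_)
  have hA' : ‖A (n+k)‖ ≤ M / ρ^(n+k) := (le_div_iff₀ (pow_pos hρ0 _)).2 (hM (n+k))
  have hst : ‖s‖^(n+j) ≤ ‖t‖^(n+j) := pow_le_pow_left₀ (norm_nonneg s) hs _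
  have hM0' : (0:ℝ) ≤ M := le_trans (by positivity) (hM 0)
  rw [norm_mul, norm_mul, norm_pow]
  calc ‖c n‖ * ‖A (n+k)‖ * ‖s‖^(n+j)
      ≤ K * (M / ρ^(n+k)) * ‖t‖^(n+j) :=
        mul_le_mul (mul_le_mul (hc n) hA' (norm_nonneg _) hK0) hst (by positivity)
          (mul_nonneg hK0 (div_nonneg hM0' (pow_pos hρ0 _).le))
    _ = (K*M*‖t‖^j/ρ^k) * (‖t‖/ρ)^n := by
        rw [div_pow, pow_add, pow_add]
        field_simp

lemma norm_one_sub_qpow_le (hq0 : 0 < q) (hq1 : q < 1) (m : ℕ) : ‖(1:ℂ) - (q:ℂ)^m‖ ≤ 2 := by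
  have h1 : ‖((q:ℂ))^m‖ = q^m := by
    rw [norm_pow, Complex.norm_real, Real.norm_of_nonneg hq0.le]
  calc ‖(1:ℂ) - (q:ℂ)^m‖ ≤ ‖(1:ℂ)‖ + ‖((q:ℂ))^m‖ := norm_sub_le _ _
    _ = 1 + q^m := by rw [norm_one, h1]
    _ ≤ 2 := by
        have : q^m ≤ 1 := pow_le_one₀ hq0.le hq1.le
        linarith

lemma norm_x_one_sub_bqpow_le (hq0 : 0 < q) (hq1 : q < 1) (x : ℂ) (m : ℕ) :
    ‖x * (1 - (β:ℂ)*(q:ℂ)^m)‖ ≤ ‖x‖ * (1 + |β|) := by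
  rw [norm_mul]
  have h2 : ‖(1:ℂ) - (β:ℂ)*(q:ℂ)^m‖ ≤ 1 + |β| := by
    calc ‖(1:ℂ) - (β:ℂ)*(q:ℂ)^m‖ ≤ ‖(1:ℂ)‖ + ‖(β:ℂ)*(q:ℂ)^m‖ := norm_sub_le _ _
      _ = 1 + |β| * q^m := by
          rw [norm_one, norm_mul, norm_pow, Complex.norm_real, Complex.norm_real,
            Real.norm_of_nonneg hq0.le, Real.norm_eq_abs]
      _ ≤ 1 + |β| := by
          have h3 : q^m ≤ 1 := pow_le_one₀ hq0.le hq1.le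
          nlinarith [abs_nonneg β]
  exact mul_le_mul_of_nonneg_left h2 (norm_nonneg x)

include hq0 hq1 in
lemma func_eq (hρ0 : 0 < ρ) (htρ : ‖t‖ < ρ) (hM : ∀ n, ‖A n‖ * ρ^n ≤ M) (x : ℂ)
    (hT1 : (1 - (q:ℂ)) * A 1 = x * (1 - (β:ℂ)) * A 0)
    (hrec : ∀ n : ℕ, (1 - (q:ℂ)^(n+2)) * A (n+2)
      = x * (1 - (β:ℂ)*(q:ℂ)^(n+1)) * A (n+1) - (1 - (q:ℂ)^(n+2)) * A n)
    (s : ℂ) (hs : ‖s‖ ≤ ‖t‖) :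
    (1 - x*s + s^2) * (∑' n : ℕ, A n * s^n)
      = (1 - (β:ℂ)*x*s + (q:ℂ)^2*s^2) * (∑' n : ℕ, A n * ((q:ℂ)*s)^n) := by
  have hqs : ‖(q:ℂ)*s‖ ≤ ‖t‖ := by
    rw [norm_mul, Complex.norm_real, Real.norm_of_nonneg hq0.le]
    calc q * ‖s‖ ≤ 1 * ‖s‖ := mul_le_mul_of_nonneg_right hq1.le (norm_nonneg s)
      _ = ‖s‖ := one_mul _
      _ ≤ ‖t‖ := hs
  have hKx : (0:ℝ) ≤ ‖x‖ * (1 + |β|) := by positivity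
  -- summability instances
  have Sf : Summable (fun n : ℕ => A n * s^n) := by
    have := summable_master hρ0 htρ hM (fun _ => 1) 1 zero_le_one (fun n => by simp) 0 0 s hs
    refine this.congr (fun n => by simp)
  have Sg : Summable (fun n : ℕ => A n * ((q:ℂ)*s)^n) := by
    have := summable_master hρ0 htρ hM (fun _ => 1) 1 zero_le_one (fun n => by simp) 0 0
      ((q:ℂ)*s) hqs
    refine this.congr (fun n => by simp)
  have S1 : Summable (fun n : ℕ => (1 - (q:ℂ)^n) * A n * s^n) :=
    summable_master hρ0 htρ hM (fun n => 1 - (q:ℂ)^n) 2 (by norm_num)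
      (fun n => norm_one_sub_qpow_le hq0 hq1 n) 0 0 s hs
  have S1' : Summable (fun n : ℕ => (1 - (q:ℂ)^(n+1)) * A (n+1) * s^(n+1)) :=
    summable_master hρ0 htρ hM (fun n => 1 - (q:ℂ)^(n+1)) 2 (by norm_num)
      (fun n => norm_one_sub_qpow_le hq0 hq1 (n+1)) 1 1 s hs
  have Su : Summable (fun n : ℕ => x * (1 - (β:ℂ)*(q:ℂ)^(n+1)) * A (n+1) * s^(n+2)) := by
    have := summable_master hρ0 htρ hM (fun n => x * (1 - (β:ℂ)*(q:ℂ)^(n+1))) (‖x‖*(1+|β|))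
      hKx (fun n => norm_x_one_sub_bqpow_le hq0 hq1 x (n+1)) 1 2 s hs
    exact this
  have Sv : Summable (fun n : ℕ => (1 - (q:ℂ)^(n+2)) * A n * s^(n+2)) :=
    summable_master hρ0 htρ hM (fun n => 1 - (q:ℂ)^(n+2)) 2 (by norm_num)
      (fun n => norm_one_sub_qpow_le hq0 hq1 (n+2)) 0 2 s hs
  have S2 : Summable (fun n : ℕ => x * (1 - (β:ℂ)*(q:ℂ)^n) * A n * s^(n+1)) :=
    summable_master hρ0 htρ hM (fun n => x * (1 - (β:ℂ)*(q:ℂ)^n)) (‖x‖*(1+|β|))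
      hKx (fun n => norm_x_one_sub_bqpow_le hq0 hq1 x n) 0 1 s hs
  -- value equalities
  have e1 : ∑' n : ℕ, (1 - (q:ℂ)^n) * A n * s^n
      = (∑' n : ℕ, A n * s^n) - (∑' n : ℕ, A n * ((q:ℂ)*s)^n) := by
    rw [← Summable.tsum_sub Sf Sg]
    exact tsum_congr (fun n => by rw [mul_pow]; ring)
  have e2 : ∑' n : ℕ, x * (1 - (β:ℂ)*(q:ℂ)^n) * A n * s^(n+1)
      = x*s*(∑' n : ℕ, A n * s^n) - (β:ℂ)*x*s*(∑' n : ℕ, A n * ((q:ℂ)*s)^n) := by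
    rw [← tsum_mul_left (a := x*s), ← tsum_mul_left (a := (β:ℂ)*x*s),
      ← Summable.tsum_sub (Sf.mul_left (x*s)) (Sg.mul_left ((β:ℂ)*x*s))]
    exact tsum_congr (fun n => by rw [mul_pow]; ring)
  have e3 : ∑' n : ℕ, (1 - (q:ℂ)^(n+2)) * A n * s^(n+2)
      = s^2*(∑' n : ℕ, A n * s^n) - (q:ℂ)^2*s^2*(∑' n : ℕ, A n * ((q:ℂ)*s)^n) := by
    rw [← tsum_mul_left (a := s^2), ← tsum_mul_left (a := (q:ℂ)^2*s^2),
      ← Summable.tsum_sub (Sf.mul_left (s^2)) (Sg.mul_left ((q:ℂ)^2*s^2))]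
    exact tsum_congr (fun n => by rw [mul_pow]; ring)
  have e4 : ∑' n : ℕ, (1 - (q:ℂ)^n) * A n * s^n
      = (∑' n : ℕ, x * (1 - (β:ℂ)*(q:ℂ)^n) * A n * s^(n+1))
        - ∑' n : ℕ, (1 - (q:ℂ)^(n+2)) * A n * s^(n+2) := by
    calc ∑' n : ℕ, (1 - (q:ℂ)^n) * A n * s^n
        = (1 - (q:ℂ)^0) * A 0 * s^0 + ∑' n : ℕ, (1 - (q:ℂ)^(n+1)) * A (n+1) * s^(n+1) :=
          Summable.tsum_eq_zero_add S1
      _ = ∑' n : ℕ, (1 - (q:ℂ)^(n+1)) * A (n+1) * s^(n+1) := by simp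
      _ = (1 - (q:ℂ)^1) * A 1 * s^1 + ∑' n : ℕ, (1 - (q:ℂ)^(n+2)) * A (n+2) * s^(n+2) :=
          Summable.tsum_eq_zero_add S1'
      _ = x * (1 - (β:ℂ)) * A 0 * s
          + ∑' n : ℕ, (x * (1 - (β:ℂ)*(q:ℂ)^(n+1)) * A (n+1) * s^(n+2)
              - (1 - (q:ℂ)^(n+2)) * A n * s^(n+2)) := by
          congr 1
          · linear_combination s * hT1
          · exact tsum_congr (fun n => by linear_combination s^(n+2) * hrec n)
      _ = x * (1 - (β:ℂ)) * A 0 * s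
          + ((∑' n : ℕ, x * (1 - (β:ℂ)*(q:ℂ)^(n+1)) * A (n+1) * s^(n+2))
            - ∑' n : ℕ, (1 - (q:ℂ)^(n+2)) * A n * s^(n+2)) := by
          rw [Summable.tsum_sub Su Sv]
      _ = (∑' n : ℕ, x * (1 - (β:ℂ)*(q:ℂ)^n) * A n * s^(n+1))
          - ∑' n : ℕ, (1 - (q:ℂ)^(n+2)) * A n * s^(n+2) := by
          rw [Summable.tsum_eq_zero_add S2]
          simp only [pow_zero, mul_one, zero_add, pow_one]
          ring
  linear_combination -e1 + e2 - e3 + e4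

lemma G_tail (hρ0 : 0 < ρ) (htρ : ‖t‖ < ρ) (hM : ∀ n, ‖A n‖ * ρ^n ≤ M) (hM0 : 0 < M)
    (hA0 : A 0 = 1) (s : ℂ) (hs : ‖s‖ ≤ ‖t‖) :
    ‖(∑' n : ℕ, A n * s^n) - 1‖ ≤ (M/ρ * (1-‖t‖/ρ)⁻¹) * ‖s‖ := by
  have hr0 : 0 ≤ ‖t‖/ρ := div_nonneg (norm_nonneg t) hρ0.le
  have hr1 : ‖t‖/ρ < 1 := (div_lt_one hρ0).2 htρ
  have Sf : Summable (fun n : ℕ => A n * s^n) := by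
    have := summable_master hρ0 htρ hM (fun _ => 1) 1 zero_le_one (fun n => by simp) 0 0 s hs
    refine this.congr (fun n => by simp)
  have S' : Summable (fun n : ℕ => A (n+1) * s^(n+1)) := by
    have := summable_master hρ0 htρ hM (fun _ => 1) 1 zero_le_one (fun n => by simp) 1 1 s hs
    refine this.congr (fun n => by simp)
  have hbound : ∀ n : ℕ, ‖A (n+1) * s^(n+1)‖ ≤ (M/ρ*‖s‖) * (‖t‖/ρ)^n := by
    intro n
    have hA' : ‖A (n+1)‖ ≤ M / ρ^(n+1) := (le_div_iff₀ (pow_pos hρ0 _)).2 (hM (n+1))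
    have hsn : ‖s‖^n ≤ ‖t‖^n := pow_le_pow_left₀ (norm_nonneg s) hs n
    rw [norm_mul, norm_pow]
    calc ‖A (n+1)‖ * ‖s‖^(n+1)
        ≤ (M / ρ^(n+1)) * ‖s‖^(n+1) := by gcongr
      _ = (M/ρ*‖s‖) * (‖s‖/ρ)^n := by rw [div_pow, pow_succ]; field_simp; ring
      _ ≤ (M/ρ*‖s‖) * (‖t‖/ρ)^n := by
          gcongr
  have hnormsum : Summable (fun n : ℕ => ‖A (n+1) * s^(n+1)‖) :=
    Summable.of_nonneg_of_le (fun n => norm_nonneg _) hbound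
      ((summable_geometric_of_lt_one hr0 hr1).mul_left _)
  have h1 : ∑' n : ℕ, A n * s^n = 1 + ∑' n : ℕ, A (n+1) * s^(n+1) := by
    rw [Summable.tsum_eq_zero_add Sf, hA0, pow_zero, mul_one]
  rw [h1]
  have h2 : ‖(1 + ∑' n : ℕ, A (n+1) * s^(n+1)) - 1‖ = ‖∑' n : ℕ, A (n+1) * s^(n+1)‖ := by
    congr 1; ring
  rw [h2]
  calc ‖∑' n : ℕ, A (n+1) * s^(n+1)‖ ≤ ∑' n : ℕ, ‖A (n+1) * s^(n+1)‖ :=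
      norm_tsum_le_tsum_norm hnormsum
    _ ≤ ∑' n : ℕ, (M/ρ*‖s‖) * (‖t‖/ρ)^n :=
      Summable.tsum_le_tsum hbound hnormsum ((summable_geometric_of_lt_one hr0 hr1).mul_left _)
    _ = (M/ρ*‖s‖) * (1-‖t‖/ρ)⁻¹ := by
        rw [tsum_mul_left, tsum_geometric_of_lt_one hr0 hr1]
    _ = (M/ρ * (1-‖t‖/ρ)⁻¹) * ‖s‖ := by ring

end FE


section Main

open Filter Topology

noncomputable def Gfun (A : ℕ → ℂ) (s : ℂ) : ℂ := ∑' n : ℕ, A n * s^n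

noncomputable def Dfun (q : ℝ) (z : ℂ) (s : ℂ) : ℂ :=
  qPochInf (z*s) (q:ℂ) * qPochInf (z⁻¹*s) (q:ℂ)

noncomputable def Nfun (q : ℝ) (τ : ℂ) (s : ℂ) : ℂ :=
  qPochInf ((q:ℂ)*τ*s) (q:ℂ) * qPochInf ((q:ℂ)*τ⁻¹*s) (q:ℂ)

variable {q β : ℝ} (hq0 : 0 < q) (hq1 : q < 1)

include hq0 hq1 in
lemma Dfun_step (z s : ℂ) :
    Dfun q z s = ((1 - z*s) * (1 - z⁻¹*s)) * Dfun q z ((q:ℂ)*s) := by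
  unfold Dfun
  have h1 := qPochInf_shift hq0 hq1 (z*s) 1
  have h2 := qPochInf_shift hq0 hq1 (z⁻¹*s) 1
  rw [Finset.prod_range_one, pow_zero, mul_one, pow_one] at h1 h2
  rw [show z*s*(q:ℂ) = z*((q:ℂ)*s) by ring] at h1
  rw [show z⁻¹*s*(q:ℂ) = z⁻¹*((q:ℂ)*s) by ring] at h2
  rw [h1, h2]
  ring

include hq0 hq1 in
lemma Nfun_step (τ s : ℂ) :
    Nfun q τ s = ((1 - (q:ℂ)*τ*s) * (1 - (q:ℂ)*τ⁻¹*s)) * Nfun q τ ((q:ℂ)*s) := by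
  unfold Nfun
  have h1 := qPochInf_shift hq0 hq1 ((q:ℂ)*τ*s) 1
  have h2 := qPochInf_shift hq0 hq1 ((q:ℂ)*τ⁻¹*s) 1
  rw [Finset.prod_range_one, pow_zero, mul_one, pow_one] at h1 h2
  rw [show (q:ℂ)*τ*s*(q:ℂ) = (q:ℂ)*τ*((q:ℂ)*s) by ring] at h1
  rw [show (q:ℂ)*τ⁻¹*s*(q:ℂ) = (q:ℂ)*τ⁻¹*((q:ℂ)*s) by ring] at h2
  rw [h1, h2]
  ring

include hq0 hq1 in
lemma qPochInf_tendsto_one (t c : ℂ) :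
    Tendsto (fun n : ℕ => qPochInf (c*((q:ℂ)^n*t)) (q:ℂ)) atTop (𝓝 1) := by
  have h1q : (0:ℝ) < 1 - q := by linarith
  have hnorm : ∀ n : ℕ, ‖c*((q:ℂ)^n*t)‖ = ‖c‖*‖t‖*q^n := by
    intro n
    rw [norm_mul, norm_mul, norm_pow, Complex.norm_real, Real.norm_of_nonneg hq0.le]
    ring
  have htq : Tendsto (fun n : ℕ => ‖c‖*‖t‖*q^n) atTop (𝓝 0) := by
    simpa using (tendsto_pow_atTop_nhds_zero_of_lt_one hq0.le hq1).const_mul (‖c‖*‖t‖)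
  have hev : ∀ᶠ n : ℕ in atTop, ‖c‖*‖t‖*q^n ≤ (1-q)/2 :=
    htq.eventually_le_const (by linarith)
  have hkey : Tendsto (fun n : ℕ => qPochInf (c*((q:ℂ)^n*t)) (q:ℂ) - 1) atTop (𝓝 0) := by
    refine squeeze_zero_norm' (a := fun n => 3*(‖c‖*‖t‖*q^n)/(1-q)) ?_ ?_
    · filter_upwards [hev] with n hn
      have := qPochInf_est hq0 hq1 (c*((q:ℂ)^n*t)) (by rw [hnorm n]; exact hn)
      rwa [hnorm n] at this
    · have : Tendsto (fun n : ℕ => 3*(‖c‖*‖t‖*q^n)/(1-q)) atTop (𝓝 (3*0/(1-q))) :=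
        ((htq.const_mul 3).div_const (1-q))
      simpa using this
  have := hkey.add_const 1
  simpa using this

theorem stmt_14 (q β : ℝ) (hq : q ∈ Set.Ioo (0 : ℝ) 1) (hβ : β < 1)
    (z τ t : ℂ) (hz0 : z ≠ 0) (hτ : τ ≠ 0)
    (ht : ‖t‖ < ‖z‖) (hz1 : ‖z‖ < 1)
    (hrel : (q : ℂ) * (τ + τ⁻¹) = (β : ℂ) * (z + z⁻¹))
    (p : ℕ → ℂ → ℂ)
    (hp0 : ∀ x, p 0 x = 1) (hp1 : ∀ x, p 1 x = x)
    (hprec : ∀ n : ℕ, 1 ≤ n → ∀ x : ℂ,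
      p (n + 1) x = x * p n x -
        ((1 - (q : ℂ) ^ n) / (1 - (β : ℂ) * (q : ℂ) ^ (n - 1))) *
        ((1 - (q : ℂ) ^ (n + 1)) / (1 - (β : ℂ) * (q : ℂ) ^ n)) * p (n - 1) x) :
    ∑' n : ℕ, (qPoch (β : ℂ) (q : ℂ) n / qPoch (q : ℂ) (q : ℂ) n) * p n (z + z⁻¹) * t ^ n =
      qPochInf ((q : ℂ) * τ * t) (q : ℂ) * qPochInf ((q : ℂ) * τ⁻¹ * t) (q : ℂ) /
        (qPochInf (z * t) (q : ℂ) * qPochInf (z⁻¹ * t) (q : ℂ)) := by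
  obtain ⟨hq0, hq1⟩ := hq
  have h1q : (0:ℝ) < 1 - q := by linarith
  have hρ0 : 0 < ‖z‖ := norm_pos_iff.2 hz0
  have hzz : z * z⁻¹ = 1 := mul_inv_cancel₀ hz0
  have hττ : τ * τ⁻¹ = 1 := mul_inv_cancel₀ hτ
  -- the sequence
  set A : ℕ → ℂ := Aseq q β p (z + z⁻¹) with hAdef
  have hA0 : A 0 = 1 := Aseq_zero p (z+z⁻¹) (hp0 _)
  have hT1 : (1 - (q:ℂ)) * A 1 = (z+z⁻¹) * (1 - (β:ℂ)) * A 0 :=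
    Aseq_one hq0 hq1 hβ p (z+z⁻¹) (hp0 _) (hp1 _)
  have hrecA : ∀ n : ℕ, (1 - (q:ℂ)^(n+2)) * A (n+2)
      = (z+z⁻¹) * (1 - (β:ℂ)*(q:ℂ)^(n+1)) * A (n+1) - (1 - (q:ℂ)^(n+2)) * A n :=
    fun n => Aseq_rec hq0 hq1 hβ p (z+z⁻¹) (fun m hm => hprec m hm (z+z⁻¹)) n
  -- growth bound
  obtain ⟨M, hM0, hM⟩ := growth_bound hq0 hq1 A z hz0 hz1 hrecA
  -- functional equation for G
  have hFE : ∀ s : ℂ, ‖s‖ ≤ ‖t‖ →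
      (1 - (z+z⁻¹)*s + s^2) * Gfun A s
        = (1 - (β:ℂ)*(z+z⁻¹)*s + (q:ℂ)^2*s^2) * Gfun A ((q:ℂ)*s) :=
    fun s hs => func_eq hq0 hq1 hρ0 ht hM (z+z⁻¹) hT1 hrecA s hs
  -- step for Phi
  have hstep : ∀ s : ℂ, ‖s‖ ≤ ‖t‖ →
      Gfun A s * Dfun q z s - Nfun q τ s
        = (1 - (β:ℂ)*(z+z⁻¹)*s + (q:ℂ)^2*s^2)
          * (Gfun A ((q:ℂ)*s) * Dfun q z ((q:ℂ)*s) - Nfun q τ ((q:ℂ)*s)) := by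
    intro s hs
    have hD := Dfun_step hq0 hq1 z s
    have hN := Nfun_step hq0 hq1 τ s
    have hG := hFE s hs
    have hxfac : (1 - z*s) * (1 - z⁻¹*s) = 1 - (z+z⁻¹)*s + s^2 := by
      linear_combination s^2 * hzz
    have hτfac : (1 - (q:ℂ)*τ*s) * (1 - (q:ℂ)*τ⁻¹*s)
        = 1 - (β:ℂ)*(z+z⁻¹)*s + (q:ℂ)^2*s^2 := by
      linear_combination (-s) * hrel + (q:ℂ)^2*s^2 * hττ
    rw [hD, hN, hxfac, hτfac]
    linear_combination (Dfun q z ((q:ℂ)*s)) * hG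
  -- iterate
  have hqnt : ∀ n : ℕ, ‖(q:ℂ)^n * t‖ ≤ ‖t‖ := by
    intro n
    rw [norm_mul, norm_pow, Complex.norm_real, Real.norm_of_nonneg hq0.le]
    calc q^n * ‖t‖ ≤ 1 * ‖t‖ :=
        mul_le_mul_of_nonneg_right (pow_le_one₀ hq0.le hq1.le) (norm_nonneg t)
      _ = ‖t‖ := one_mul _
  have hiter : ∀ n : ℕ,
      Gfun A t * Dfun q z t - Nfun q τ t
        = (∏ j ∈ Finset.range n,
            (1 - (β:ℂ)*(z+z⁻¹)*((q:ℂ)^j*t) + (q:ℂ)^2*((q:ℂ)^j*t)^2))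
          * (Gfun A ((q:ℂ)^n*t) * Dfun q z ((q:ℂ)^n*t) - Nfun q τ ((q:ℂ)^n*t)) := by
    intro n
    induction n with
    | zero => simp
    | succ n ih =>
      rw [ih, hstep ((q:ℂ)^n*t) (hqnt n), Finset.prod_range_succ,
        show (q:ℂ)*((q:ℂ)^n*t) = (q:ℂ)^(n+1)*t by ring]
      ring
  -- prefactor bound
  have hc0 : (0:ℝ) ≤ ‖(β:ℂ)*(z+z⁻¹)*t‖ + ‖t‖^2 := by positivity
  have hPbound : ∀ n : ℕ,
      ‖∏ j ∈ Finset.range n,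
          (1 - (β:ℂ)*(z+z⁻¹)*((q:ℂ)^j*t) + (q:ℂ)^2*((q:ℂ)^j*t)^2)‖
        ≤ Real.exp ((‖(β:ℂ)*(z+z⁻¹)*t‖ + ‖t‖^2) * (1-q)⁻¹) := by
    intro n
    rw [norm_prod]
    have hfac : ∀ j : ℕ, ‖(1:ℂ) - (β:ℂ)*(z+z⁻¹)*((q:ℂ)^j*t) + (q:ℂ)^2*((q:ℂ)^j*t)^2‖
        ≤ 1 + (‖(β:ℂ)*(z+z⁻¹)*t‖ + ‖t‖^2) * q^j := by
      intro j
      have e1 : ‖(β:ℂ)*(z+z⁻¹)*((q:ℂ)^j*t)‖ = ‖(β:ℂ)*(z+z⁻¹)*t‖ * q^j := by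
        rw [show (β:ℂ)*(z+z⁻¹)*((q:ℂ)^j*t) = ((β:ℂ)*(z+z⁻¹)*t) * (q:ℂ)^j by ring,
          norm_mul, norm_pow, Complex.norm_real, Real.norm_of_nonneg hq0.le]
      have e2 : ‖(q:ℂ)^2*((q:ℂ)^j*t)^2‖ = q^(2*j+2) * ‖t‖^2 := by
        rw [show (q:ℂ)^2*((q:ℂ)^j*t)^2 = (q:ℂ)^(2*j+2) * t^2 by ring,
          norm_mul, norm_pow, norm_pow, Complex.norm_real, Real.norm_of_nonneg hq0.le]
      have e3 : q^(2*j+2) ≤ q^j := pow_le_pow_of_le_one hq0.le hq1.le (by omega)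
      calc ‖(1:ℂ) - (β:ℂ)*(z+z⁻¹)*((q:ℂ)^j*t) + (q:ℂ)^2*((q:ℂ)^j*t)^2‖
          ≤ ‖(1:ℂ) - (β:ℂ)*(z+z⁻¹)*((q:ℂ)^j*t)‖ + ‖(q:ℂ)^2*((q:ℂ)^j*t)^2‖ := norm_add_le _ _
        _ ≤ (‖(1:ℂ)‖ + ‖(β:ℂ)*(z+z⁻¹)*((q:ℂ)^j*t)‖) + ‖(q:ℂ)^2*((q:ℂ)^j*t)^2‖ := by
            have := norm_sub_le (1:ℂ) ((β:ℂ)*(z+z⁻¹)*((q:ℂ)^j*t))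
            linarith
        _ = 1 + ‖(β:ℂ)*(z+z⁻¹)*t‖ * q^j + q^(2*j+2) * ‖t‖^2 := by
            rw [norm_one, e1, e2]
        _ ≤ 1 + (‖(β:ℂ)*(z+z⁻¹)*t‖ + ‖t‖^2) * q^j := by
            have h4 : q^(2*j+2) * ‖t‖^2 ≤ q^j * ‖t‖^2 :=
              mul_le_mul_of_nonneg_right e3 (by positivity)
            nlinarith [pow_nonneg hq0.le j]
    calc ∏ j ∈ Finset.range n, ‖(1:ℂ) - (β:ℂ)*(z+z⁻¹)*((q:ℂ)^j*t) + (q:ℂ)^2*((q:ℂ)^j*t)^2‖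
        ≤ ∏ j ∈ Finset.range n, Real.exp ((‖(β:ℂ)*(z+z⁻¹)*t‖ + ‖t‖^2) * q^j) := by
          apply Finset.prod_le_prod (fun j _ => norm_nonneg _)
          intro j _
          refine (hfac j).trans ?_
          have := Real.add_one_le_exp ((‖(β:ℂ)*(z+z⁻¹)*t‖ + ‖t‖^2) * q^j)
          linarith
      _ = Real.exp (∑ j ∈ Finset.range n, (‖(β:ℂ)*(z+z⁻¹)*t‖ + ‖t‖^2) * q^j) :=
          (Real.exp_sum _ _).symm
      _ ≤ Real.exp ((‖(β:ℂ)*(z+z⁻¹)*t‖ + ‖t‖^2) * (1-q)⁻¹) := by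
          apply Real.exp_le_exp.2
          rw [← Finset.mul_sum]
          apply mul_le_mul_of_nonneg_left _ hc0
          have hsum : ∑ j ∈ Finset.range n, q^j ≤ ∑' j : ℕ, q^j :=
            Summable.sum_le_tsum (Finset.range n) (fun i _ => by positivity)
              (summable_geometric_of_lt_one hq0.le hq1)
          rwa [tsum_geometric_of_lt_one hq0.le hq1] at hsum
  -- limits
  have hGl : Tendsto (fun n : ℕ => Gfun A ((q:ℂ)^n*t)) atTop (𝓝 1) := by
    have hbd : ∀ n : ℕ, ‖Gfun A ((q:ℂ)^n*t) - 1‖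
        ≤ (M/‖z‖ * (1-‖t‖/‖z‖)⁻¹ * ‖t‖) * q^n := by
      intro n
      have := G_tail hρ0 ht hM hM0 hA0 ((q:ℂ)^n*t) (hqnt n)
      refine this.trans ?_
      rw [norm_mul, norm_pow, Complex.norm_real, Real.norm_of_nonneg hq0.le]
      apply le_of_eq
      ring
    have hlim0 : Tendsto (fun n : ℕ => (M/‖z‖ * (1-‖t‖/‖z‖)⁻¹ * ‖t‖) * q^n) atTop (𝓝 0) := by
      simpa using (tendsto_pow_atTop_nhds_zero_of_lt_one hq0.le hq1).const_mul
        (M/‖z‖ * (1-‖t‖/‖z‖)⁻¹ * ‖t‖)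
    have := squeeze_zero_norm hbd hlim0
    have h2 := this.add_const 1
    simpa using h2
  have hDl : Tendsto (fun n : ℕ => Dfun q z ((q:ℂ)^n*t)) atTop (𝓝 1) := by
    have := (qPochInf_tendsto_one hq0 hq1 t z).mul (qPochInf_tendsto_one hq0 hq1 t z⁻¹)
    simpa [Dfun] using this
  have hNl : Tendsto (fun n : ℕ => Nfun q τ ((q:ℂ)^n*t)) atTop (𝓝 1) := by
    have := (qPochInf_tendsto_one hq0 hq1 t ((q:ℂ)*τ)).mul
      (qPochInf_tendsto_one hq0 hq1 t ((q:ℂ)*τ⁻¹))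
    simpa [Nfun] using this
  have hΦl : Tendsto (fun n : ℕ =>
      Gfun A ((q:ℂ)^n*t) * Dfun q z ((q:ℂ)^n*t) - Nfun q τ ((q:ℂ)^n*t)) atTop (𝓝 0) := by
    have := (hGl.mul hDl).sub hNl
    simpa using this
  -- conclude Phi t = 0
  have hzero : Gfun A t * Dfun q z t - Nfun q τ t = 0 := by
    have hb : ∀ n : ℕ, ‖Gfun A t * Dfun q z t - Nfun q τ t‖
        ≤ Real.exp ((‖(β:ℂ)*(z+z⁻¹)*t‖ + ‖t‖^2) * (1-q)⁻¹)
          * ‖Gfun A ((q:ℂ)^n*t) * Dfun q z ((q:ℂ)^n*t) - Nfun q τ ((q:ℂ)^n*t)‖ := by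
      intro n
      rw [hiter n, norm_mul]
      exact mul_le_mul_of_nonneg_right (hPbound n) (norm_nonneg _)
    have hlim : Tendsto (fun n : ℕ =>
        Real.exp ((‖(β:ℂ)*(z+z⁻¹)*t‖ + ‖t‖^2) * (1-q)⁻¹)
          * ‖Gfun A ((q:ℂ)^n*t) * Dfun q z ((q:ℂ)^n*t) - Nfun q τ ((q:ℂ)^n*t)‖) atTop (𝓝 0) := by
      have := hΦl.norm.const_mul (Real.exp ((‖(β:ℂ)*(z+z⁻¹)*t‖ + ‖t‖^2) * (1-q)⁻¹))
      simpa using this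
    have h0 : ‖Gfun A t * Dfun q z t - Nfun q τ t‖ ≤ 0 :=
      ge_of_tendsto hlim (Filter.Eventually.of_forall hb)
    exact norm_le_zero_iff.1 h0
  -- nonvanishing of denominator
  have hD1 : qPochInf (z*t) (q:ℂ) ≠ 0 := by
    apply qPochInf_ne_zero hq0 hq1
    rw [norm_mul]
    calc ‖z‖ * ‖t‖ ≤ 1 * ‖t‖ := mul_le_mul_of_nonneg_right hz1.le (norm_nonneg t)
      _ = ‖t‖ := one_mul _
      _ < 1 := lt_trans ht hz1
  have hD2 : qPochInf (z⁻¹*t) (q:ℂ) ≠ 0 := by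
    apply qPochInf_ne_zero hq0 hq1
    rw [norm_mul, norm_inv]
    rw [inv_mul_lt_one₀ hρ0] -- ‖z‖⁻¹ * ‖t‖ < 1 ↔ ‖t‖ < ‖z‖
    exact ht
  -- final assembly
  have hLHS : ∑' n : ℕ, (qPoch (β : ℂ) (q : ℂ) n / qPoch (q : ℂ) (q : ℂ) n)
      * p n (z + z⁻¹) * t ^ n = Gfun A t := by
    apply tsum_congr
    intro n
    rfl
  rw [hLHS, eq_div_iff (mul_ne_zero hD1 hD2)]
  have hz2 : Gfun A t * (qPochInf (z*t) (q:ℂ) * qPochInf (z⁻¹*t) (q:ℂ))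
      - qPochInf ((q:ℂ)*τ*t) (q:ℂ) * qPochInf ((q:ℂ)*τ⁻¹*t) (q:ℂ) = 0 := hzero
  linear_combination hz2

end Main
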